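/- Suppose the pointwise limit V(y_0) := lim_{T→∞} V_T(y_0) exists for every y_0 ∈ Y and V is continuous; fix y_0 ∈ Y, and let ψ̄, η̄ : Y → ℝ be continuous functions satisfying k(y,u) + ψ̄(y_0) − ψ̄(y) + η̄(f(y,u)) − η̄(y) ≥ d*(y_0) and ψ̄(f(y,u)) − ψ̄(y) ≥ 0 for all (y,u) ∈ G (an optimal solution of the dual problem). If an admissible process (y(·),u(·)) from y_0 satisfies, for every t ≥ 0, k(y(t),u(t)) − ψ̄(y(t)) + η̄(f(y(t),u(t))) − η̄(y(t)) = V(y_0) − ψ̄(y_0) and ψ̄(y(t)) = ψ̄(y_0), then lim_{T→∞} (1/T) Σ_{t=0}^{T−1} k(y(t),u(t)) = V(y_0); in particular this process attains the infimum in the problem inf over admissible processes from y_0 of liminf_{T→∞} (1/T) Σ_{t=0}^{T−1} k(y(t),u(t)), whose optimal value is V(y_0). -/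

import Mathlib

open MeasureTheory Filter Topology Set

noncomputable section

variable {m : ℕ} {U₀ : Type*} [MetricSpace U₀] [CompactSpace U₀]
  [MeasurableSpace U₀] [BorelSpace U₀]

/-- The set `G = {(y,u) : y ∈ Y, u ∈ U y, f (y,u) ∈ Y}`. -/
def Gset (Y : Set (Fin m → ℝ)) (U : (Fin m → ℝ) → Set U₀)
    (f : (Fin m → ℝ) × U₀ → (Fin m → ℝ)) : Set ((Fin m → ℝ) × U₀) :=
  {p | p.1 ∈ Y ∧ p.2 ∈ U p.1 ∧ f p ∈ Y}

/-- Admissible process from the initial condition `y₀`. -/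
def Admissible (Y : Set (Fin m → ℝ)) (U : (Fin m → ℝ) → Set U₀)
    (f : (Fin m → ℝ) × U₀ → (Fin m → ℝ)) (y₀ : Fin m → ℝ)
    (y : ℕ → (Fin m → ℝ)) (u : ℕ → U₀) : Prop :=
  y 0 = y₀ ∧ ∀ t : ℕ, u t ∈ U (y t) ∧ y t ∈ Y ∧ y (t + 1) = f (y t, u t)

/-- Admissible process without a prescribed initial condition. -/
def AdmissibleProc (Y : Set (Fin m → ℝ)) (U : (Fin m → ℝ) → Set U₀)
    (f : (Fin m → ℝ) × U₀ → (Fin m → ℝ))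
    (y : ℕ → (Fin m → ℝ)) (u : ℕ → U₀) : Prop :=
  ∀ t : ℕ, u t ∈ U (y t) ∧ y t ∈ Y ∧ y (t + 1) = f (y t, u t)

/-- The finite-horizon value function `V_T(y₀)`. -/
def VT (Y : Set (Fin m → ℝ)) (U : (Fin m → ℝ) → Set U₀)
    (f : (Fin m → ℝ) × U₀ → (Fin m → ℝ)) (k : (Fin m → ℝ) × U₀ → ℝ)
    (T : ℕ) (y₀ : Fin m → ℝ) : ℝ :=
  sInf {c | ∃ y u, Admissible Y U f y₀ y u ∧
    c = (∑ t ∈ Finset.range T, k (y t, u t)) / (T : ℝ)}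

/-- The discounted value function `h_α(y₀)`. -/
def hdisc (Y : Set (Fin m → ℝ)) (U : (Fin m → ℝ) → Set U₀)
    (f : (Fin m → ℝ) × U₀ → (Fin m → ℝ)) (k : (Fin m → ℝ) × U₀ → ℝ)
    (α : ℝ) (y₀ : Fin m → ℝ) : ℝ :=
  (1 - α) * sInf {c | ∃ y u, Admissible Y U f y₀ y u ∧
    c = ∑' t : ℕ, α ^ t * k (y t, u t)}

/-- The set `W` of probability measures on `G` with zero drift. -/
def Wset (Y : Set (Fin m → ℝ)) (U : (Fin m → ℝ) → Set U₀)
    (f : (Fin m → ℝ) × U₀ → (Fin m → ℝ)) :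
    Set (Measure ((Fin m → ℝ) × U₀)) :=
  {γ | IsProbabilityMeasure γ ∧ γ (Gset Y U f)ᶜ = 0 ∧
    ∀ φ : (Fin m → ℝ) → ℝ, ContinuousOn φ Y →
      ∫ p, (φ (f p) - φ p.1) ∂γ = 0}

/-- The set `W₁(y₀)`. -/
def W1set (Y : Set (Fin m → ℝ)) (U : (Fin m → ℝ) → Set U₀)
    (f : (Fin m → ℝ) × U₀ → (Fin m → ℝ)) (y₀ : Fin m → ℝ) :
    Set (Measure ((Fin m → ℝ) × U₀)) :=
  {γ | γ ∈ Wset Y U f ∧ ∃ ξ : Measure ((Fin m → ℝ) × U₀),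
    IsFiniteMeasure ξ ∧ ξ (Gset Y U f)ᶜ = 0 ∧
    ∀ φ : (Fin m → ℝ) → ℝ, ContinuousOn φ Y →
      ∫ p, (φ p.1 - φ y₀) ∂γ = ∫ p, (φ (f p) - φ p.1) ∂ξ}

/-- The set `W₂(y₀)`. -/
def W2set (Y : Set (Fin m → ℝ)) (U : (Fin m → ℝ) → Set U₀)
    (f : (Fin m → ℝ) × U₀ → (Fin m → ℝ)) (y₀ : Fin m → ℝ) :
    Set (Measure ((Fin m → ℝ) × U₀)) :=
  {γ | γ ∈ Wset Y U f ∧ ∃ ξ : ℕ → Measure ((Fin m → ℝ) × U₀),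
    (∀ i, IsFiniteMeasure (ξ i) ∧ (ξ i) (Gset Y U f)ᶜ = 0) ∧
    ∀ φ : (Fin m → ℝ) → ℝ, ContinuousOn φ Y →
      Tendsto (fun i => ∫ p, (φ (f p) - φ p.1) ∂(ξ i)) atTop
        (𝓝 (∫ p, (φ p.1 - φ y₀) ∂γ))}

/-- The optimal value `d*(y₀)` of the dual IDLP problem. -/
def dstar (Y : Set (Fin m → ℝ)) (U : (Fin m → ℝ) → Set U₀)
    (f : (Fin m → ℝ) × U₀ → (Fin m → ℝ)) (k : (Fin m → ℝ) × U₀ → ℝ)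
    (y₀ : Fin m → ℝ) : ℝ :=
  sSup {μ : ℝ | ∃ ψ η : (Fin m → ℝ) → ℝ, ContinuousOn ψ Y ∧ ContinuousOn η Y ∧
    ∀ p ∈ Gset Y U f,
      0 ≤ k p + (ψ y₀ - ψ p.1) + η (f p) - η p.1 - μ ∧
      0 ≤ ψ (f p) - ψ p.1}

/-- The optimal value `k*(y₀)` of the primal IDLP problem. -/
def kstar (Y : Set (Fin m → ℝ)) (U : (Fin m → ℝ) → Set U₀)
    (f : (Fin m → ℝ) × U₀ → (Fin m → ℝ)) (k : (Fin m → ℝ) × U₀ → ℝ)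
    (y₀ : Fin m → ℝ) : ℝ :=
  sInf {c | ∃ γ ξ : Measure ((Fin m → ℝ) × U₀),
    γ ∈ Wset Y U f ∧ IsFiniteMeasure ξ ∧ ξ (Gset Y U f)ᶜ = 0 ∧
    (∀ φ : (Fin m → ℝ) → ℝ, ContinuousOn φ Y →
      ∫ p, (φ y₀ - φ p.1) ∂γ + ∫ p, (φ (f p) - φ p.1) ∂ξ = 0) ∧
    c = ∫ p, k p ∂γ}

/-- Occupational measure of a process over `{0, …, T-1}`. -/
def occMeas (y : ℕ → (Fin m → ℝ)) (u : ℕ → U₀) (T : ℕ) :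
    Measure ((Fin m → ℝ) × U₀) :=
  (T : ENNReal)⁻¹ • ∑ t ∈ Finset.range T, Measure.dirac (y t, u t)

/-- Discounted occupational measure of a process. -/
def discMeas (α : ℝ) (y : ℕ → (Fin m → ℝ)) (u : ℕ → U₀) :
    Measure ((Fin m → ℝ) × U₀) :=
  Measure.sum fun t : ℕ =>
    ENNReal.ofReal ((1 - α) * α ^ t) • Measure.dirac (y t, u t)

/-- The set `Γ_T(y₀)` of occupational measures. -/
def GammaT (Y : Set (Fin m → ℝ)) (U : (Fin m → ℝ) → Set U₀)
    (f : (Fin m → ℝ) × U₀ → (Fin m → ℝ)) (y₀ : Fin m → ℝ) (T : ℕ) :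
    Set (Measure ((Fin m → ℝ) × U₀)) :=
  {γ | ∃ y u, Admissible Y U f y₀ y u ∧ γ = occMeas y u T}

/-- The set `Θ_α(y₀)` of discounted occupational measures. -/
def Theta (Y : Set (Fin m → ℝ)) (U : (Fin m → ℝ) → Set U₀)
    (f : (Fin m → ℝ) × U₀ → (Fin m → ℝ)) (α : ℝ) (y₀ : Fin m → ℝ) :
    Set (Measure ((Fin m → ℝ) × U₀)) :=
  {γ | ∃ y u, Admissible Y U f y₀ y u ∧ γ = discMeas α y u}

/-- Weak* convergence of a sequence of measures (tested against functions
continuous on `G`). -/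
def WeakStarTendstoOn (G : Set ((Fin m → ℝ) × U₀))
    (γs : ℕ → Measure ((Fin m → ℝ) × U₀))
    (γ : Measure ((Fin m → ℝ) × U₀)) : Prop :=
  ∀ q : (Fin m → ℝ) × U₀ → ℝ, ContinuousOn q G →
    Tendsto (fun i => ∫ p, q p ∂(γs i)) atTop (𝓝 (∫ p, q p ∂γ))

/-- A `T`-periodic process. -/
def PeriodicProc (y : ℕ → (Fin m → ℝ)) (u : ℕ → U₀) (T : ℕ) : Prop :=
  ∀ t : ℕ, y (t + T) = y t ∧ u (t + T) = u t

/-- The point `z` is finite-time reachable from `y₀`. -/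
def FTReachable (Y : Set (Fin m → ℝ)) (U : (Fin m → ℝ) → Set U₀)
    (f : (Fin m → ℝ) × U₀ → (Fin m → ℝ)) (y₀ z : Fin m → ℝ) : Prop :=
  ∃ (tb : ℕ) (ty : ℕ → (Fin m → ℝ)) (tu : ℕ → U₀),
    Admissible Y U f y₀ ty tu ∧ ty tb = z

/-- The set `Γ_per(y₀)` of occupational measures of periodic processes
finite-time reachable from `y₀`. -/
def GammaPer (Y : Set (Fin m → ℝ)) (U : (Fin m → ℝ) → Set U₀)
    (f : (Fin m → ℝ) × U₀ → (Fin m → ℝ)) (y₀ : Fin m → ℝ) :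
    Set (Measure ((Fin m → ℝ) × U₀)) :=
  {γ | ∃ (T : ℕ) (y : ℕ → (Fin m → ℝ)) (u : ℕ → U₀), 1 ≤ T ∧
    AdmissibleProc Y U f y u ∧ PeriodicProc y u T ∧
    FTReachable Y U f y₀ (y 0) ∧ γ = occMeas y u T}

/-- The optimal value `V_per(y₀)` over periodic regimes. -/
def Vper (Y : Set (Fin m → ℝ)) (U : (Fin m → ℝ) → Set U₀)
    (f : (Fin m → ℝ) × U₀ → (Fin m → ℝ)) (k : (Fin m → ℝ) × U₀ → ℝ)
    (y₀ : Fin m → ℝ) : ℝ :=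
  sInf {c | ∃ (T : ℕ) (y : ℕ → (Fin m → ℝ)) (u : ℕ → U₀), 1 ≤ T ∧
    AdmissibleProc Y U f y u ∧ PeriodicProc y u T ∧
    FTReachable Y U f y₀ (y 0) ∧
    c = (∑ t ∈ Finset.range T, k (y t, u t)) / (T : ℝ)}

/-- The set `K` of continuous functions used in the alternative
representation of the limit optimal values. -/
def Kcal (Y : Set (Fin m → ℝ)) (U : (Fin m → ℝ) → Set U₀)
    (f : (Fin m → ℝ) × U₀ → (Fin m → ℝ)) (k : (Fin m → ℝ) × U₀ → ℝ) :
    Set ((Fin m → ℝ) → ℝ) :=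
  {w | ContinuousOn w Y ∧ (∀ p ∈ Gset Y U f, w p.1 ≤ w (f p)) ∧
    ∀ γ ∈ Wset Y U f, ∫ p, w p.1 ∂γ ≤ ∫ p, k p ∂γ}

/-- The optimal value `d*(θ, y₀)` of the perturbed dual problem. -/
def dstarTheta (Y : Set (Fin m → ℝ)) (U : (Fin m → ℝ) → Set U₀)
    (f : (Fin m → ℝ) × U₀ → (Fin m → ℝ)) (k : (Fin m → ℝ) × U₀ → ℝ)
    (θ : ℝ) (y₀ : Fin m → ℝ) : ℝ :=
  sSup {μ : ℝ | ∃ ψ η : (Fin m → ℝ) → ℝ, ContinuousOn ψ Y ∧ ContinuousOn η Y ∧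
    ∀ p ∈ Gset Y U f,
      0 ≤ k p + (ψ y₀ - ψ p.1) + η (f p) - η p.1 - μ ∧
      -θ ≤ ψ (f p) - ψ p.1}

/-- The optimal value `d̄*(θ, y₀)` of the perturbed dual problem in the
`ψ(y₀)` form. -/
def dbarTheta (Y : Set (Fin m → ℝ)) (U : (Fin m → ℝ) → Set U₀)
    (f : (Fin m → ℝ) × U₀ → (Fin m → ℝ)) (k : (Fin m → ℝ) × U₀ → ℝ)
    (θ : ℝ) (y₀ : Fin m → ℝ) : ℝ :=
  sSup {c : ℝ | ∃ ψ η : (Fin m → ℝ) → ℝ, ContinuousOn ψ Y ∧ ContinuousOn η Y ∧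
    (∀ p ∈ Gset Y U f,
      0 ≤ k p - ψ p.1 + η (f p) - η p.1 ∧
      -θ ≤ ψ (f p) - ψ p.1) ∧ c = ψ y₀}

/-- The optimal value `k*(θ, y₀)` of the perturbed primal problem. -/
def kstarTheta (Y : Set (Fin m → ℝ)) (U : (Fin m → ℝ) → Set U₀)
    (f : (Fin m → ℝ) × U₀ → (Fin m → ℝ)) (k : (Fin m → ℝ) × U₀ → ℝ)
    (θ : ℝ) (y₀ : Fin m → ℝ) : ℝ :=
  sInf {c | ∃ γ ξ : Measure ((Fin m → ℝ) × U₀),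
    γ ∈ Wset Y U f ∧ IsFiniteMeasure ξ ∧ ξ (Gset Y U f)ᶜ = 0 ∧
    (∀ φ : (Fin m → ℝ) → ℝ, ContinuousOn φ Y →
      ∫ p, (φ y₀ - φ p.1) ∂γ + ∫ p, (φ (f p) - φ p.1) ∂ξ = 0) ∧
    c = ∫ p, k p ∂γ + θ * (ξ Set.univ).toReal}

theorem stmt_15
    (Y : Set (Fin m → ℝ)) (hYne : Y.Nonempty) (hYcomp : IsCompact Y)
    (U : (Fin m → ℝ) → Set U₀)
    (hUne : ∀ y ∈ Y, (U y).Nonempty) (hUcomp : ∀ y ∈ Y, IsCompact (U y))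
    (hUgraph : IsClosed {p : (Fin m → ℝ) × U₀ | p.1 ∈ Y ∧ p.2 ∈ U p.1})
    (f : (Fin m → ℝ) × U₀ → (Fin m → ℝ)) (hf : Continuous f)
    (k : (Fin m → ℝ) × U₀ → ℝ) (hk : Continuous k)
    (hA : ∀ y ∈ Y, ∃ u ∈ U y, f (y, u) ∈ Y)
    (V : (Fin m → ℝ) → ℝ)
    (hVlim : ∀ z ∈ Y, Tendsto (fun T : ℕ => VT Y U f k T z) atTop (𝓝 (V z)))
    (hVc : ContinuousOn V Y)
    (y₀ : Fin m → ℝ) (hy₀ : y₀ ∈ Y)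
    (ψ η : (Fin m → ℝ) → ℝ) (hψc : ContinuousOn ψ Y) (hηc : ContinuousOn η Y)
    (hopt : ∀ p ∈ Gset Y U f,
      dstar Y U f k y₀ ≤ k p + (ψ y₀ - ψ p.1) + η (f p) - η p.1 ∧
      0 ≤ ψ (f p) - ψ p.1)
    (y : ℕ → (Fin m → ℝ)) (u : ℕ → U₀) (hadm : Admissible Y U f y₀ y u)
    (hproc : ∀ t : ℕ,
      k (y t, u t) - ψ (y t) + η (f (y t, u t)) - η (y t) = V y₀ - ψ y₀ ∧
      ψ (y t) = ψ y₀) :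
    Tendsto (fun T : ℕ => (∑ t ∈ Finset.range T, k (y t, u t)) / (T : ℝ))
      atTop (𝓝 (V y₀)) ∧
    ∀ (y' : ℕ → (Fin m → ℝ)) (u' : ℕ → U₀), Admissible Y U f y₀ y' u' →
      V y₀ ≤ liminf
        (fun T : ℕ => (∑ t ∈ Finset.range T, k (y' t, u' t)) / (T : ℝ)) atTop := by
  -- A lower bound for k on Y × univ
  obtain ⟨u₀, hu₀⟩ := hUne y₀ hy₀
  obtain ⟨p₀, _, hC'⟩ := (hYcomp.prod isCompact_univ).exists_isMinOn
    ⟨(y₀, u₀), hy₀, mem_univ _⟩ hk.continuousOn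
  set C := k p₀ with hCdef
  have hC : ∀ p ∈ Y ×ˢ (univ : Set U₀), C ≤ k p := fun p hp => hC' hp
  -- a bound for |η| on Y
  obtain ⟨z₀, _, hM'⟩ := hYcomp.exists_isMaxOn hYne hηc.abs
  set M := |η z₀| with hMdef
  have hM : ∀ z ∈ Y, |η z| ≤ M := fun z hz => hM' hz
  -- an upper bound for k on Y × univ
  obtain ⟨p₁, _, hD'⟩ := (hYcomp.prod isCompact_univ).exists_isMaxOn
    ⟨(y₀, u₀), hy₀, mem_univ _⟩ hk.continuousOn
  set D := k p₁ with hDdef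
  have hD : ∀ p ∈ Y ×ˢ (univ : Set U₀), k p ≤ D := fun p hp => hD' hp
  -- lower bound for all averages of admissible processes
  have hlb : ∀ (yy : ℕ → (Fin m → ℝ)) (uu : ℕ → U₀), Admissible Y U f y₀ yy uu →
      ∀ T : ℕ, min C 0 ≤ (∑ t ∈ Finset.range T, k (yy t, uu t)) / (T : ℝ) := by
    intro yy uu haa T
    rcases Nat.eq_zero_or_pos T with h | h
    · simp [h]
    · have hT : (0 : ℝ) < T := by exact_mod_cast h
      refine le_trans (min_le_left _ _) ?_
      rw [le_div_iff₀ hT]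
      have : ∑ t ∈ Finset.range T, C ≤ ∑ t ∈ Finset.range T, k (yy t, uu t) :=
        Finset.sum_le_sum fun t _ => hC (yy t, uu t) ⟨(haa.2 t).2.1, mem_univ _⟩
      simp only [Finset.sum_const, Finset.card_range, nsmul_eq_mul] at this
      linarith
  -- key identity for the given process
  have hyY : ∀ t, y t ∈ Y := fun t => (hadm.2 t).2.1
  have hkey : ∀ t, k (y t, u t) = V y₀ + η (y t) - η (y (t + 1)) := by
    intro t
    have h1 := (hproc t).1
    have h2 := (hproc t).2
    have h3 := (hadm.2 t).2.2
    rw [h3]; linarith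
  have hsum : ∀ T : ℕ, ∑ t ∈ Finset.range T, k (y t, u t)
      = (T : ℝ) * V y₀ + (η (y 0) - η (y T)) := by
    intro T
    have : ∑ t ∈ Finset.range T, k (y t, u t)
        = ∑ t ∈ Finset.range T, (V y₀ + (η (y t) - η (y (t + 1)))) :=
      Finset.sum_congr rfl fun t _ => by rw [hkey t]; ring
    rw [this, Finset.sum_add_distrib, Finset.sum_range_sub' (fun t => η (y t)),
      Finset.sum_const, Finset.card_range, nsmul_eq_mul]
  constructor
  · -- convergence of the averages of the given process
    have h0 : Tendsto (fun T : ℕ => (η (y 0) - η (y T)) / (T : ℝ)) atTop (𝓝 0) := by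
      refine squeeze_zero_norm (fun T => ?_) (tendsto_const_div_atTop_nhds_zero_nat (2 * M))
      · rcases Nat.eq_zero_or_pos T with h | h
        · simp [h]
        · have hT : (0 : ℝ) < T := by exact_mod_cast h
          rw [Real.norm_eq_abs, abs_div, abs_of_pos hT, div_le_div_iff₀ hT hT]
          have h1 : |η (y 0)| ≤ M := hM _ (hyY 0)
          have h2 : |η (y T)| ≤ M := hM _ (hyY T)
          have h3 : |η (y 0) - η (y T)| ≤ |η (y 0)| + |η (y T)| := abs_sub _ _
          nlinarith [abs_nonneg (η (y 0) - η (y T))]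
    have h1 : Tendsto (fun T : ℕ => V y₀ + (η (y 0) - η (y T)) / (T : ℝ)) atTop
        (𝓝 (V y₀)) := by
      simpa using tendsto_const_nhds.add h0
    refine h1.congr' ?_
    filter_upwards [eventually_ge_atTop 1] with T hT
    have hT' : (T : ℝ) ≠ 0 := by positivity
    rw [hsum T]
    field_simp
  · -- optimality
    intro y' u' hadm'
    have hVT_le : ∀ T : ℕ, VT Y U f k T y₀
        ≤ (∑ t ∈ Finset.range T, k (y' t, u' t)) / (T : ℝ) := by
      intro T
      apply csInf_le
      · refine ⟨min C 0, ?_⟩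
        rintro c ⟨yy, uu, haa, rfl⟩
        exact hlb yy uu haa T
      · exact ⟨y', u', hadm', rfl⟩
    have hcob : IsCoboundedUnder (· ≥ ·) atTop (fun T : ℕ => VT Y U f k T y₀) :=
      (hVlim y₀ hy₀).isBoundedUnder_le.isCoboundedUnder_ge
    have hub : ∀ T : ℕ, (∑ t ∈ Finset.range T, k (y' t, u' t)) / (T : ℝ) ≤ max D 0 := by
      intro T
      rcases Nat.eq_zero_or_pos T with h | h
      · simp [h]
      · have hT : (0 : ℝ) < T := by exact_mod_cast h
        refine le_trans ?_ (le_max_left _ _)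
        rw [div_le_iff₀ hT]
        have : ∑ t ∈ Finset.range T, k (y' t, u' t) ≤ ∑ t ∈ Finset.range T, D :=
          Finset.sum_le_sum fun t _ => hD (y' t, u' t) ⟨(hadm'.2 t).2.1, mem_univ _⟩
        simp only [Finset.sum_const, Finset.card_range, nsmul_eq_mul] at this
        linarith
    have hcob2 : IsCoboundedUnder (· ≥ ·) atTop
        (fun T : ℕ => (∑ t ∈ Finset.range T, k (y' t, u' t)) / (T : ℝ)) :=
      isCoboundedUnder_ge_of_le atTop hub
    have hbdd : IsBoundedUnder (· ≥ ·) atTop (fun T : ℕ => VT Y U f k T y₀) :=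
      (hVlim y₀ hy₀).isBoundedUnder_ge
    calc V y₀ = liminf (fun T : ℕ => VT Y U f k T y₀) atTop :=
          (hVlim y₀ hy₀).liminf_eq.symm
      _ ≤ _ := liminf_le_liminf (Eventually.of_forall hVT_le) hbdd hcob2
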